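/- In the Coxeter group W of type E₇, the element w₀ · (s₁s₄s₆) is conjugate in W to s₁s₂s₅s₇. -/

import Mathlib

open CoxeterMatrix

namespace Stmt13Aux

abbrev W := CoxeterMatrix.E₇.Group

def cs : CoxeterSystem E₇ W := E₇.toCoxeterSystem

local prefix:100 "σ" => cs.simple
local prefix:100 "π" => cs.wordProd
local prefix:100 "ℓ" => cs.length

/-! ### The reflection representation data -/

def cfun (i j : Fin 7) : ℤ := if i = j then 2 else if E₇ i j = 3 then -1 else 0

def dotc (i : Fin 7) (v : Fin 7 → ℤ) : ℤ :=
  cfun i 0 * v 0 + cfun i 1 * v 1 + cfun i 2 * v 2 + cfun i 3 * v 3 +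
  cfun i 4 * v 4 + cfun i 5 * v 5 + cfun i 6 * v 6

def Tfun (i : Fin 7) (v : Fin 7 → ℤ) : Fin 7 → ℤ :=
  fun k => v k - (if k = i then dotc i v else 0)

def T (i : Fin 7) : Module.End ℤ (Fin 7 → ℤ) where
  toFun := Tfun i
  map_add' := by
    intro x y; funext k
    simp only [Tfun, dotc, Pi.add_apply]
    split <;> ring
  map_smul' := by
    intro c x; funext k
    simp only [Tfun, dotc, Pi.smul_apply, smul_eq_mul, RingHom.id_apply]
    split <;> ring

def ei (i : Fin 7) : Fin 7 → ℤ := fun k => if k = i then 1 else 0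

lemma T_basis : ∀ i j b : Fin 7, ((T i * T j) ^ (E₇ i j)) (ei b) = ei b := by decide

lemma ei_single (b : Fin 7) : (Pi.single b 1 : Fin 7 → ℤ) = ei b := by
  funext k
  rw [Pi.single_apply, ei]

lemma liftable : E₇.IsLiftable T := by
  intro i j
  apply Module.Basis.ext (Pi.basisFun ℤ (Fin 7))
  intro b
  rw [Pi.basisFun_apply, ei_single, Module.End.one_apply]
  exact T_basis i j b

noncomputable def rho : W →* Module.End ℤ (Fin 7 → ℤ) := cs.lift ⟨T, liftable⟩

lemma rho_simple (i : Fin 7) : rho (σ i) = T i := cs.lift_apply_simple liftable i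

noncomputable def act (w : W) (v : Fin 7 → ℤ) : Fin 7 → ℤ := rho w v

lemma act_one (v : Fin 7 → ℤ) : act 1 v = v := by
  simp [act, map_one, Module.End.one_apply]

lemma act_mul (u w : W) (v : Fin 7 → ℤ) : act (u * w) v = act u (act w v) := by
  simp [act, map_mul, Module.End.mul_apply]

lemma act_simple (j : Fin 7) (v : Fin 7 → ℤ) : act (σ j) v = T j v := by
  rw [act, rho_simple]

lemma act_mul_s (u : W) (j : Fin 7) (v : Fin 7 → ℤ) :
    act (u * σ j) v = act u (T j v) := by
  rw [act_mul, act_simple]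

lemma act_add (u : W) (x y : Fin 7 → ℤ) : act u (x + y) = act u x + act u y :=
  map_add (rho u) x y

lemma act_neg (u : W) (x : Fin 7 → ℤ) : act u (-x) = -act u x :=
  map_neg (rho u) x

/-! ### Positivity -/

def Pos (v : Fin 7 → ℤ) : Prop := (∀ k, 0 ≤ v k) ∧ v ≠ 0

def Neg' (v : Fin 7 → ℤ) : Prop := (∀ k, v k ≤ 0) ∧ v ≠ 0

lemma pos_ei : ∀ i, Pos (ei i) := by unfold Pos; decide

lemma pos_add {x y : Fin 7 → ℤ} (hx : Pos x) (hy : Pos y) : Pos (x + y) := by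
  obtain ⟨hx1, hx2⟩ := hx
  obtain ⟨hy1, hy2⟩ := hy
  refine ⟨fun k => add_nonneg (hx1 k) (hy1 k), ?_⟩
  obtain ⟨k, hk⟩ := Function.ne_iff.mp hx2
  have : 0 < x k := lt_of_le_of_ne (hx1 k) (fun h => hk (by simpa [ei] using h.symm))
  intro h
  have := congrFun h k
  simp only [Pi.add_apply, Pi.zero_apply] at this
  have := hy1 k
  omega

lemma neg_of_pos {x : Fin 7 → ℤ} (hx : Pos x) : Neg' (-x) := by
  obtain ⟨hx1, hx2⟩ := hx
  exact ⟨fun k => by simpa using hx1 k, by simpa using hx2⟩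

/-! ### Decidable facts about the representation -/

lemma fact2 : ∀ i j : Fin 7, E₇ i j = 2 → T j (ei i) = ei i := by
  intro i j; fin_cases i <;> fin_cases j <;> decide

lemma fact3 : ∀ i j : Fin 7, E₇ i j = 3 → T j (ei i) = ei i + ei j := by
  intro i j; fin_cases i <;> fin_cases j <;> decide

lemma fact33 : ∀ i j : Fin 7, E₇ i j = 3 → T i (T j (ei i)) = ei j := by
  intro i j; fin_cases i <;> fin_cases j <;> decide

lemma factself : ∀ i : Fin 7, T i (ei i) = -ei i := by decide

lemma fact23 : ∀ i j : Fin 7, i ≠ j → E₇ i j = 2 ∨ E₇ i j = 3 := by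
  intro i j; fin_cases i <;> fin_cases j <;> decide

/-! ### Braid lemmas in W -/

lemma comm2 {i j : Fin 7} (h : E₇ i j = 2) : σ i * σ j = σ j * σ i := by
  have hp := cs.simple_mul_simple_pow i j
  rw [h] at hp
  have h2 : (σ i * σ j) * (σ i * σ j) = 1 := by rw [← pow_two]; exact hp
  have := eq_inv_of_mul_eq_one_left h2
  rw [this, mul_inv_rev, cs.inv_simple, cs.inv_simple]

lemma braid3 {i j : Fin 7} (h : E₇ i j = 3) : σ i * σ j * σ i = σ j * σ i * σ j := by
  have hp := cs.simple_mul_simple_pow i j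
  rw [h] at hp
  rw [pow_succ, pow_succ, pow_one] at hp
  simp only [mul_assoc] at hp
  have h6 : (σ i * σ j * σ i) * (σ j * σ i * σ j) = 1 := by
    simp only [mul_assoc]
    exact hp
  have h7 := eq_inv_of_mul_eq_one_left h6
  rw [h7]
  simp [mul_inv_rev, cs.inv_simple, mul_assoc]

/-! ### The key positivity theorem -/

lemma length_mul_s_le (u : W) (k : Fin 7) : ℓ (u * σ k) ≤ ℓ u + 1 := by
  have := cs.length_mul_le u (σ k)
  rwa [cs.length_simple] at this

theorem pos_of_ascent : ∀ n (w : W) (i : Fin 7), ℓ w = n →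
    ℓ w < ℓ (w * σ i) → Pos (act w (ei i)) := by
  intro n
  induction n using Nat.strong_induction_on with
  | _ n IH =>
    intro w i hn hlt
    rcases eq_or_ne w 1 with rfl | hw
    · rw [act_one]; exact pos_ei i
    obtain ⟨j, hj⟩ := cs.exists_rightDescent_of_ne_one hw
    rw [CoxeterSystem.IsRightDescent] at hj
    have hij : i ≠ j := by rintro rfl; omega
    have hws_i : ℓ (w * σ i) = ℓ w + 1 := by
      rcases cs.length_mul_simple w i with h | h
      · exact h
      · omega
    have hv1 : ℓ (w * σ j) + 1 = ℓ w := by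
      rcases cs.length_mul_simple w j with h | h
      · omega
      · exact h
    have hw_eq : w = (w * σ j) * σ j := by
      rw [CoxeterSystem.simple_mul_simple_cancel_right]
    rcases fact23 i j hij with h2 | h3
    · -- commuting case
      have hvia : (w * σ j) * σ i = (w * σ i) * σ j := by
        rw [mul_assoc, mul_assoc, comm2 h2]
      have hvi : ℓ (w * σ j) < ℓ ((w * σ j) * σ i) := by
        rcases cs.length_mul_simple (w * σ i) j with h | h <;> rw [hvia] <;> omega
      have hpos := IH (ℓ (w * σ j)) (by omega) (w * σ j) i rfl hvi
      rw [hw_eq, act_mul_s, fact2 i j h2]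
      exact hpos
    · by_cases hvi : ℓ (w * σ j) < ℓ ((w * σ j) * σ i)
      · have hpos1 := IH (ℓ (w * σ j)) (by omega) (w * σ j) i rfl hvi
        have hvj : ℓ (w * σ j) < ℓ ((w * σ j) * σ j) := by
          rw [CoxeterSystem.simple_mul_simple_cancel_right]
          omega
        have hpos2 := IH (ℓ (w * σ j)) (by omega) (w * σ j) j rfl hvj
        rw [hw_eq, act_mul_s, fact3 i j h3, act_add]
        exact pos_add hpos1 hpos2
      · have hvi2 : ℓ ((w * σ j) * σ i) + 1 = ℓ (w * σ j) := by
          rcases cs.length_mul_simple (w * σ j) i with h | h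
          · omega
          · exact h
        have hveq : w * σ j = ((w * σ j) * σ i) * σ i := by
          rw [CoxeterSystem.simple_mul_simple_cancel_right]
        by_cases hvj : ℓ ((w * σ j) * σ i) < ℓ (((w * σ j) * σ i) * σ j)
        · have hpos := IH (ℓ ((w * σ j) * σ i)) (by omega) ((w * σ j) * σ i) j rfl hvj
          rw [hw_eq, hveq, act_mul_s, act_mul_s, fact33 i j h3]
          exact hpos
        · have hvj2 : ℓ (((w * σ j) * σ i) * σ j) + 1 = ℓ ((w * σ j) * σ i) := by
            rcases cs.length_mul_simple ((w * σ j) * σ i) j with h | h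
            · omega
            · exact h
          exfalso
          have hbr : w * σ i = (((((w * σ j) * σ i) * σ j) * σ i) * σ j) := by
            conv_lhs => rw [hw_eq, hveq]
            have hb := braid3 h3
            calc (((w * σ j) * σ i) * σ i) * σ j * σ i
                = ((w * σ j) * σ i) * (σ i * σ j * σ i) := by
                  simp only [mul_assoc]
              _ = ((w * σ j) * σ i) * (σ j * σ i * σ j) := by rw [hb]
              _ = (((((w * σ j) * σ i) * σ j) * σ i) * σ j) := by
                  simp only [mul_assoc]
          have hle : ℓ (w * σ i) ≤ ℓ (((w * σ j) * σ i) * σ j) + 2 := by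
            rw [hbr]
            have h1 := length_mul_s_le ((((w * σ j) * σ i) * σ j) * σ i) j
            have h2 := length_mul_s_le (((w * σ j) * σ i) * σ j) i
            omega
          omega

lemma descent_neg {w : W} {i : Fin 7} (h : ℓ (w * σ i) < ℓ w) : Neg' (act w (ei i)) := by
  have hasc : ℓ (w * σ i) < ℓ ((w * σ i) * σ i) := by
    rw [CoxeterSystem.simple_mul_simple_cancel_right]
    exact h
  have hpos := pos_of_ascent (ℓ (w * σ i)) (w * σ i) i rfl hasc
  have : act w (ei i) = -(act (w * σ i) (ei i)) := by
    conv_lhs => rw [show w = (w * σ i) * σ i from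
      (CoxeterSystem.simple_mul_simple_cancel_right cs i).symm]
    rw [act_mul_s, factself, act_neg]
  rw [this]
  exact neg_of_pos hpos

/-! ### Identification of the longest element -/

def wc : List (Fin 7) := List.flatten (List.replicate 9 [0,1,2,3,4,5,6])

set_option maxRecDepth 100000 in
lemma wc_prod_eval : ∀ b : Fin 7, ((wc.map T).prod) (ei b) = -ei b := by decide

lemma act_wc (b : Fin 7) : act (π wc) (ei b) = -ei b := by
  have h1 : rho (π wc) = (wc.map T).prod := by
    rw [CoxeterSystem.wordProd, map_list_prod, List.map_map]
    congr 1
  rw [act, h1]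
  exact wc_prod_eval b

theorem w0_eq (w₀ : W) (hw₀ : ∀ w : W, ℓ w ≤ ℓ w₀) : w₀ = π wc.reverse := by
  have hdesc : ∀ i, ℓ (w₀ * σ i) < ℓ w₀ := fun i =>
    lt_of_le_of_ne (hw₀ _) (cs.length_mul_simple_ne w₀ i)
  have hu : w₀ * π wc = 1 := by
    by_contra hne
    obtain ⟨j, hj⟩ := cs.exists_rightDescent_of_ne_one hne
    rw [CoxeterSystem.IsRightDescent] at hj
    have h1 : Neg' (act (w₀ * π wc) (ei j)) := descent_neg hj
    have h2 : act (w₀ * π wc) (ei j) = -(act w₀ (ei j)) := by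
      rw [act_mul, act_wc, act_neg]
    have h3 : Neg' (act w₀ (ei j)) := descent_neg (hdesc j)
    obtain ⟨hn1, hnz⟩ := h1
    obtain ⟨hn2, _⟩ := h3
    apply hnz
    funext k
    have ha := hn1 k
    rw [h2] at ha
    have hb := hn2 k
    rw [h2]
    simp only [Pi.neg_apply, Pi.zero_apply] at ha ⊢
    omega
  have : w₀ = (π wc)⁻¹ := by
    rwa [← mul_eq_one_iff_eq_inv]
  rw [this, ← cs.wordProd_reverse]

/-! ### Word moves -/

def app (ω : List (Fin 7)) (m : ℕ) : List (Fin 7) :=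
  match m % 3, ω.drop (m / 3) with
  | 0, a :: b :: t => if a = b then ω.take (m / 3) ++ t else ω
  | 1, a :: b :: t => if E₇ a b = 2 then ω.take (m / 3) ++ b :: a :: t else ω
  | 2, a :: b :: c :: t => if a = c ∧ E₇ a b = 3 then ω.take (m / 3) ++ b :: a :: b :: t else ω
  | _, _ => ω

lemma pi_split (ω : List (Fin 7)) (p : ℕ) (l : List (Fin 7)) (h : ω.drop p = l) :
    π ω = π (ω.take p) * π l := by
  rw [← h, ← cs.wordProd_append, List.take_append_drop]

lemma del_head (a : Fin 7) (x : W) : σ a * (σ a * x) = x :=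
  CoxeterSystem.simple_mul_simple_cancel_left cs a

lemma swap_head {a b : Fin 7} (h : E₇ a b = 2) (x : W) :
    σ a * (σ b * x) = σ b * (σ a * x) := by
  rw [← mul_assoc, comm2 h, mul_assoc]

lemma braid_head {a b : Fin 7} (h : E₇ a b = 3) (x : W) :
    σ a * (σ b * (σ a * x)) = σ b * (σ a * (σ b * x)) := by
  have hb := braid3 h
  calc σ a * (σ b * (σ a * x)) = (σ a * σ b * σ a) * x := by simp only [mul_assoc]
    _ = (σ b * σ a * σ b) * x := by rw [hb]
    _ = σ b * (σ a * (σ b * x)) := by simp only [mul_assoc]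

lemma app_prod (ω : List (Fin 7)) (m : ℕ) : π (app ω m) = π ω := by
  unfold app
  split
  case _ a b t hm hd =>
    split
    case isTrue hab =>
      subst hab
      rw [cs.wordProd_append, pi_split ω (m/3) _ hd]
      congr 1
      simp only [cs.wordProd_cons]
      exact (del_head a (π t)).symm
    case isFalse => rfl
  case _ a b t hm hd =>
    split
    case isTrue hab =>
      rw [cs.wordProd_append, pi_split ω (m/3) _ hd]
      congr 1
      simp only [cs.wordProd_cons]
      exact (swap_head hab (π t)).symm
    case isFalse => rfl
  case _ a b c t hm hd =>
    split
    case isTrue hab =>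
      obtain ⟨hac, h3⟩ := hab
      subst hac
      rw [cs.wordProd_append, pi_split ω (m/3) _ hd]
      congr 1
      simp only [cs.wordProd_cons]
      exact (braid_head h3 (π t)).symm
    case isFalse => rfl
  case _ => rfl

def apps (ω : List (Fin 7)) (ms : List ℕ) : List (Fin 7) := ms.foldl app ω

lemma apps_prod : ∀ (ms : List ℕ) (ω : List (Fin 7)), π (apps ω ms) = π ω := by
  intro ms
  induction ms with
  | nil => intro ω; rfl
  | cons m ms ih =>
    intro ω
    show π (apps (app ω m) ms) = π ω
    rw [ih, app_prod]

def wg : List (Fin 7) := [5,3,4,2,3,0,2,1,3,4,5,6,3,4,5,3,4,2,3,0,2,1,3,4,3,0,2,1]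

def moves : List Nat := [34,37,31,26,32,38,43,46,49,52,55,58,61,64,67,70,73,76,79,81,65,70,73,76,40,
  34,28,31,35,41,46,49,52,55,58,43,37,19,22,25,28,31,34,38,44,49,52,55,59,64,
  67,70,73,77,81,70,73,76,64,55,58,61,65,58,46,40,16,19,22,25,28,31,34,37,41,
  47,52,55,59,64,68,73,77,81,73,76,79,82,86,91,94,97,100,103,105,70,49,43,46,50,
  55,43,40,44,49,31,35,29,34,38,43,46,50,56,61,65,71,76,79,82,86,91,94,97,100,
  102,59,64,67,71,76,79,82,86,91,94,97,99,91,76,79,82,85,88,92,73,76,79,83,64,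
  52,55,59,65,70,73,76,67,70,61,64,32,37,40,43,46,49,52,55,58,25,22,26,31,34,
  37,40,43,46,49,52,55,59,65,71,77,82,86,91,95,99,80,85,88,91,76,80,85,40,35,
  41,46,49,43,37,16,7,11,17,22,25,28,31,34,38,44,50,55,58,61,64,67,70,73,76,
  80,86,92,96,82,77,83,88,91,93,85,79,73,76,80,86,91,94,97,88,91,70,73,52,55,
  58,61,65,70,74,79,82,85,61,64,67,46,49,52,56,61,64,68,73,76,79,52,55,58,61,
  28,31,19,22,5,10,13,16,19,23,28,32,37,40,43,47,52,55,58,62,67,70,73,76,80,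
  86,92,98,102,82,28,31,34,38,43,46,50,55,58,61,65,70,73,77,83,88,91,94,97,100,
  103,105,91,73,76,79,82,86,92,97,100,82,85,76,34,37,40,43,25,29,34,37,23,28,31,
  10,13,17,22,25,28,32,38,44,49,52,55,58,61,65,70,73,77,82,86,91,94,97,101,105,
  67,70,73,64,67,59,64,68,74,79,82,85,89,94,28,31,34,37,40,43,47,52,55,58,61,
  25,28,20,25,29,34,37,41,46,49,34,10,13,7,10,14,19,22,25,29,35,40,43,46,50,
  55,58,62,67,70,74,79,83,88,91,95,100,102,88,85,89,94,97,100,102,85,88,91,94,76,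
  79,82,73,67,46,49,53,58,61,64,68,74,64,67,22,25,28,19,4,7,10,14,20,25,29,
  34,37,40,43,47,52,55,59,64,68,73,77,83,88,91,95,99,97,100,103,71,76,79,83,88,
  91,94,97,64,61,65,70,73,76,79,83,88,91,85,52,55,58,49,52,55,59,64,67,70,73,
  76,79,82,86,92,98,104,108,82,85,88,91,94,97,55,58,61,65,71,76,79,82,85,88,52,
  55,59,64,67,71,76,79,46,49,53,58,61,64,67,71,76,80,85,89,94,98,103,106,108,76,
  79,73,68,74,80,85,88,91,94,97,100,103,105,82,85,76,79,70,73,64,67,70,74,80,86,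
  91,94,97,100,102,88,91,82,85,76,79,40,35,41,46,49,52,55,58,61,64,67,70,73,76,
  80,86,92,97,99,95,100,102,88,91,95,100,103,106,88,58,61,64,53,58,61,65,70,73,76,
  79,83,89,94,97,100,73,76,79,82,70,73,43,46,37,40,43,47,52,55,58,61,65,70,74,
  79,83,88,91,94,58,61,64,67,70,73,76,55,58,61,64,52,25,28,31,34,37,40,43,47,
  53,58,61,65,70,73,77,82,85,88,91,95,101,107,111,61,64,67,70,73,76,79,82,86,91,
  94,97,100,58,61,55,40,43,46,50,56,62,67,70,73,76,80,85,88,91,46,49,28,31,34,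
  37,41,46,50,55,58,62,67,70,74,79,82,55,22,16,19,23,28,31,35,40,43,46,50,56,
  61,64,68,73,76,79,83,88,92,97,101,106,108,79,82,85,88,91,94,76,79,82,71,76,79,
  83,88,91,95,100,103,106,108,79,82,85,76,79,73,52,19,22,25,2,7,10,13,16,19,22,
  26,31,34,38,43,47,53,58,61,64,68,74,80,86,91,94,97,100,103,105,100,88,91,94,97,
  101,105,76,64,67,71,77,82,85,89,94,97,100,58,55,59,64,67,70,52,55,59,49,52,46,
  43,47,53,58,62,67,71,76,79,82,85,89,76,79,82,73,76,56,61,64,67,70,22,25,19,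
  22,26,31,34,37,40,43,46,49,16,19,22,26,31,34,37,4,7,11,16,19,22,26,31,34,
  38,43,46,50,55,58,61,64,67,71,77,83,88,92,97,101,105,86,91,94,97,82,86,91,79,
  64,67,70,74,80,85,88,92,98,102,102,99,88,91,94,96,93,90,70,73,46,49,53,58,61,
  65,70,74,79,82,85,87,84,81,78,70,73,75,72,69,66,63,16,19,22,25,29,34,37,40,
  43,46,49,53,58,60,13,16,19,23,28,31,10,13,17,22,25,7,11,16,19,22,26,32,37,
  40,43,47,52,55,57,22,25,28,31,34,37,40,43,46,50,54,19,22,14,19,23,28,31,34,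
  37,40,44,49,51,10,14,19,23,28,31,34,38,43,46,48,45,42,39,36,28,31,33,30,27,
  24,16,19,21,18,13,15,12,1,4,7,1]

def bigword : List (Fin 7) := wg ++ wc.reverse ++ [0,3,5] ++ wg.reverse

def mv0 : List Nat := [34,37,31,26,32,38,43,46,49,52,55,58,61,64,67,70,73,76,79,81,65,70,73,76,40,34,28,31,35,41,46,49,52,55,58,43,37,19,22,25]
def mv1 : List Nat := [28,31,34,38,44,49,52,55,59,64,67,70,73,77,81,70,73,76,64,55,58,61,65,58,46,40,16,19,22,25,28,31,34,37,41,47,52,55,59,64]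
def mv2 : List Nat := [68,73,77,81,73,76,79,82,86,91,94,97,100,103,105,70,49,43,46,50,55,43,40,44,49,31,35,29,34,38,43,46,50,56,61,65,71,76,79,82]
def mv3 : List Nat := [86,91,94,97,100,102,59,64,67,71,76,79,82,86,91,94,97,99,91,76,79,82,85,88,92,73,76,79,83,64,52,55,59,65,70,73,76,67,70,61]
def mv4 : List Nat := [64,32,37,40,43,46,49,52,55,58,25,22,26,31,34,37,40,43,46,49,52,55,59,65,71,77,82,86,91,95,99,80,85,88,91,76,80,85,40,35]
def mv5 : List Nat := [41,46,49,43,37,16,7,11,17,22,25,28,31,34,38,44,50,55,58,61,64,67,70,73,76,80,86,92,96,82,77,83,88,91,93,85,79,73,76,80]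
def mv6 : List Nat := [86,91,94,97,88,91,70,73,52,55,58,61,65,70,74,79,82,85,61,64,67,46,49,52,56,61,64,68,73,76,79,52,55,58,61,28,31,19,22,5]
def mv7 : List Nat := [10,13,16,19,23,28,32,37,40,43,47,52,55,58,62,67,70,73,76,80,86,92,98,102,82,28,31,34,38,43,46,50,55,58,61,65,70,73,77,83]
def mv8 : List Nat := [88,91,94,97,100,103,105,91,73,76,79,82,86,92,97,100,82,85,76,34,37,40,43,25,29,34,37,23,28,31,10,13,17,22,25,28,32,38,44,49]
def mv9 : List Nat := [52,55,58,61,65,70,73,77,82,86,91,94,97,101,105,67,70,73,64,67,59,64,68,74,79,82,85,89,94,28,31,34,37,40,43,47,52,55,58,61]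
def mv10 : List Nat := [25,28,20,25,29,34,37,41,46,49,34,10,13,7,10,14,19,22,25,29,35,40,43,46,50,55,58,62,67,70,74,79,83,88,91,95,100,102,88,85]
def mv11 : List Nat := [89,94,97,100,102,85,88,91,94,76,79,82,73,67,46,49,53,58,61,64,68,74,64,67,22,25,28,19,4,7,10,14,20,25,29,34,37,40,43,47]
def mv12 : List Nat := [52,55,59,64,68,73,77,83,88,91,95,99,97,100,103,71,76,79,83,88,91,94,97,64,61,65,70,73,76,79,83,88,91,85,52,55,58,49,52,55]
def mv13 : List Nat := [59,64,67,70,73,76,79,82,86,92,98,104,108,82,85,88,91,94,97,55,58,61,65,71,76,79,82,85,88,52,55,59,64,67,71,76,79,46,49,53]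
def mv14 : List Nat := [58,61,64,67,71,76,80,85,89,94,98,103,106,108,76,79,73,68,74,80,85,88,91,94,97,100,103,105,82,85,76,79,70,73,64,67,70,74,80,86]
def mv15 : List Nat := [91,94,97,100,102,88,91,82,85,76,79,40,35,41,46,49,52,55,58,61,64,67,70,73,76,80,86,92,97,99,95,100,102,88,91,95,100,103,106,88]
def mv16 : List Nat := [58,61,64,53,58,61,65,70,73,76,79,83,89,94,97,100,73,76,79,82,70,73,43,46,37,40,43,47,52,55,58,61,65,70,74,79,83,88,91,94]
def mv17 : List Nat := [58,61,64,67,70,73,76,55,58,61,64,52,25,28,31,34,37,40,43,47,53,58,61,65,70,73,77,82,85,88,91,95,101,107,111,61,64,67,70,73]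
def mv18 : List Nat := [76,79,82,86,91,94,97,100,58,61,55,40,43,46,50,56,62,67,70,73,76,80,85,88,91,46,49,28,31,34,37,41,46,50,55,58,62,67,70,74]
def mv19 : List Nat := [79,82,55,22,16,19,23,28,31,35,40,43,46,50,56,61,64,68,73,76,79,83,88,92,97,101,106,108,79,82,85,88,91,94,76,79,82,71,76,79]
def mv20 : List Nat := [83,88,91,95,100,103,106,108,79,82,85,76,79,73,52,19,22,25,2,7,10,13,16,19,22,26,31,34,38,43,47,53,58,61,64,68,74,80,86,91]
def mv21 : List Nat := [94,97,100,103,105,100,88,91,94,97,101,105,76,64,67,71,77,82,85,89,94,97,100,58,55,59,64,67,70,52,55,59,49,52,46,43,47,53,58,62]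
def mv22 : List Nat := [67,71,76,79,82,85,89,76,79,82,73,76,56,61,64,67,70,22,25,19,22,26,31,34,37,40,43,46,49,16,19,22,26,31,34,37,4,7,11,16]
def mv23 : List Nat := [19,22,26,31,34,38,43,46,50,55,58,61,64,67,71,77,83,88,92,97,101,105,86,91,94,97,82,86,91,79,64,67,70,74,80,85,88,92,98,102]
def mv24 : List Nat := [102,99,88,91,94,96,93,90,70,73,46,49,53,58,61,65,70,74,79,82,85,87,84,81,78,70,73,75,72,69,66,63,16,19,22,25,29,34,37,40]
def mv25 : List Nat := [43,46,49,53,58,60,13,16,19,23,28,31,10,13,17,22,25,7,11,16,19,22,26,32,37,40,43,47,52,55,57,22,25,28,31,34,37,40,43,46]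
def mv26 : List Nat := [50,54,19,22,14,19,23,28,31,34,37,40,44,49,51,10,14,19,23,28,31,34,38,43,46,48,45,42,39,36,28,31,33,30,27,24,16,19,21,18]
def mv27 : List Nat := [13,15,12,1,4,7,1]
def sw0 : List (Fin 7) := [5,3,4,2,3,0,1,4,5,2,6,4,5,3,2,4,3,0,2,1,5,4,3,0,2,1,4,5,4,3,2,1,0,6,5,4,3,2,1,0,6,5,4,3,2,1,0,6,5,4,3,2,1,0,6,5,4,3,2,1,0,6,5,4,3,2,1,0,6,5,4,3,2,1,0,6,5,4,3,2,1,0,6,5,4,3,2,1,0,0,3,5,1,2,0,3,4,3,1,2,0,3,2,4,3,5,4,3,6,5,4,3,1,2,0,3,2,4,3,5]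
def sw1 : List (Fin 7) := [5,3,4,2,3,1,4,5,6,4,5,3,4,2,0,3,2,5,0,4,3,1,4,3,4,5,2,3,2,1,0,6,5,4,3,2,1,0,6,5,4,3,2,1,0,6,5,4,3,2,1,0,6,5,4,3,2,1,0,6,5,4,3,2,1,0,6,5,4,3,2,1,0,6,5,4,3,2,1,0,6,5,4,3,2,1,0,0,3,5,1,2,0,3,4,3,1,2,0,3,2,4,3,5,4,3,6,5,4,3,1,2,0,3,2,4,3,5]
def sw2 : List (Fin 7) := [5,3,4,2,3,1,4,5,6,3,4,5,4,3,2,0,3,4,2,3,1,3,2,4,3,1,0,6,4,5,4,3,2,1,0,5,4,3,2,1,0,6,5,4,3,2,1,0,6,5,4,3,2,1,0,6,5,4,3,2,1,0,6,5,4,3,2,1,0,6,5,4,3,2,1,0,6,5,4,3,2,1,0,0,3,5,1,2,0,3,4,3,1,2,0,3,2,4,3,5,4,3,6,5,4,3,1,2,0,3,2,4,3,5]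
def sw3 : List (Fin 7) := [5,3,4,2,3,1,4,5,6,3,4,5,4,3,2,0,3,2,1,3,2,4,6,5,3,4,2,3,1,3,2,0,2,3,2,1,0,6,5,4,3,2,1,0,6,5,4,3,2,1,0,6,5,4,3,2,1,0,6,5,4,3,2,1,0,6,5,4,3,2,1,0,6,5,4,3,2,1,0,0,3,5,1,2,0,3,4,3,1,2,0,3,2,4,3,5,4,3,6,5,4,3,1,2,0,3,2,4,3,5]
def sw4 : List (Fin 7) := [5,3,4,2,3,1,4,3,6,5,4,2,3,2,0,2,1,3,2,5,6,4,5,3,4,1,3,2,0,3,2,1,3,1,0,6,5,4,3,2,1,0,6,5,4,3,2,1,0,6,5,4,3,2,1,0,6,5,4,3,2,1,0,6,5,4,3,2,1,0,6,5,4,3,2,1,0,0,3,5,1,2,0,3,4,3,1,2,0,3,2,4,3,5,4,3,6,5,4,3,1,2,0,3,2,4,3,5]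
def sw5 : List (Fin 7) := [5,3,2,3,4,1,3,6,5,4,2,0,3,1,2,3,0,2,5,6,4,5,3,4,2,0,3,1,3,2,3,6,5,4,3,2,1,0,6,5,4,3,2,1,0,6,5,4,3,2,1,0,6,5,4,3,2,1,0,6,5,4,3,2,1,0,6,5,4,3,2,1,0,0,3,5,1,2,0,3,4,3,1,2,0,3,2,4,3,5,4,3,6,5,4,3,1,2,0,3,2,4,3,5]
def sw6 : List (Fin 7) := [5,2,3,2,4,1,6,5,3,2,0,4,3,1,2,0,5,4,3,2,0,6,5,4,3,1,2,5,6,4,5,3,4,2,3,2,1,0,6,5,4,3,2,1,0,6,5,4,3,2,1,0,6,5,4,3,2,1,0,6,5,4,3,2,1,0,6,5,4,3,2,1,0,0,3,5,1,2,0,3,4,3,1,2,0,3,2,4,3,5,4,3,6,5,4,3,1,2,0,3,2,4,3,5]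
def sw7 : List (Fin 7) := [5,2,3,4,1,6,5,3,2,4,3,1,2,0,5,4,3,2,0,6,5,4,3,1,2,5,4,6,5,6,3,4,2,3,1,0,6,5,4,3,2,1,0,6,5,4,3,2,1,0,6,5,4,3,2,1,0,6,5,4,3,2,1,0,6,5,4,3,2,1,0,0,3,5,1,2,0,3,4,3,1,2,0,3,2,4,3,5,4,3,6,5,4,3,1,2,0,3,2,4,3,5]
def sw8 : List (Fin 7) := [5,2,3,1,6,5,4,3,2,0,4,5,3,4,1,3,2,1,0,6,5,4,3,1,5,6,4,3,2,5,4,3,1,0,4,5,4,3,2,1,0,6,5,4,3,2,1,0,6,5,4,3,2,1,0,6,5,4,3,2,1,0,6,5,4,3,2,1,0,0,3,5,1,2,0,3,4,3,1,2,0,3,2,4,3,5,4,3,6,5,4,3,1,2,0,3,2,4,3,5]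
def sw9 : List (Fin 7) := [5,2,3,1,6,5,4,3,2,4,5,3,4,1,3,2,0,6,4,5,6,2,3,4,1,3,2,5,4,3,1,0,3,4,5,3,2,1,0,6,5,4,3,2,1,0,6,5,4,3,2,1,0,6,5,4,3,2,1,0,6,5,4,3,2,1,0,0,3,5,1,2,0,3,4,3,1,2,0,3,2,4,3,5,4,3,6,5,4,3,1,2,0,3,2,4,3,5]
def sw10 : List (Fin 7) := [5,2,6,5,1,3,4,5,2,3,1,4,3,2,0,6,3,4,5,6,2,3,4,1,3,2,5,4,0,3,1,3,4,5,2,1,0,6,5,4,3,2,1,0,6,5,4,3,2,1,0,6,5,4,3,2,1,0,6,5,4,3,2,1,0,0,3,5,1,2,0,3,4,3,1,2,0,3,2,4,3,5,4,3,6,5,4,3,1,2,0,3,2,4,3,5]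
def sw11 : List (Fin 7) := [5,6,5,1,3,2,4,3,1,5,4,3,2,0,3,4,5,4,6,2,3,4,5,1,3,4,3,1,2,3,4,5,0,2,0,6,5,4,3,2,1,0,6,5,4,3,2,1,0,6,5,4,3,2,1,0,6,5,4,3,2,1,0,0,3,5,1,2,0,3,4,3,1,2,0,3,2,4,3,5,4,3,6,5,4,3,1,2,0,3,2,4,3,5]
def sw12 : List (Fin 7) := [5,6,5,1,3,2,4,3,1,5,4,3,2,0,3,4,2,3,1,5,6,5,4,3,1,2,3,4,0,5,6,4,5,3,4,2,3,2,1,0,6,5,4,3,2,1,0,6,5,4,3,2,1,0,6,5,4,3,2,1,0,0,3,5,1,2,0,3,4,3,1,2,0,3,2,4,3,5,4,3,6,5,4,3,1,2,0,3,2,4,3,5]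
def sw13 : List (Fin 7) := [5,6,5,1,3,2,4,3,1,5,4,3,2,0,3,2,6,5,4,5,3,1,2,3,4,5,6,3,4,5,2,3,4,0,2,3,1,0,6,5,4,3,2,1,0,6,5,4,3,2,1,0,6,5,4,3,2,1,0,0,3,5,1,2,0,3,4,3,1,2,0,3,2,4,3,5,4,3,6,5,4,3,1,2,0,3,2,4,3,5]
def sw14 : List (Fin 7) := [5,6,5,1,3,2,4,3,1,5,4,3,2,0,3,2,6,5,4,3,1,4,5,6,3,2,4,3,5,4,5,0,2,3,1,5,4,3,2,1,0,6,5,4,3,2,1,0,6,5,4,3,2,1,0,0,3,5,1,2,0,3,4,3,1,2,0,3,2,4,3,5,4,3,6,5,4,3,1,2,0,3,2,4,3,5]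
def sw15 : List (Fin 7) := [5,6,5,1,3,2,4,3,1,5,4,2,3,0,2,6,5,4,3,1,4,5,6,3,4,5,2,0,3,1,4,3,2,0,6,5,3,4,3,2,1,0,6,5,4,3,2,1,0,0,3,5,1,2,0,3,4,3,1,2,0,3,2,4,3,5,4,3,6,5,4,3,1,2,0,3,2,4,3,5]
def sw16 : List (Fin 7) := [5,6,5,1,3,2,4,3,1,5,4,2,0,6,5,2,3,4,5,6,1,3,2,0,4,3,1,5,4,3,2,0,5,6,4,5,3,4,3,2,1,0,6,5,4,3,2,1,0,0,3,5,1,2,0,3,4,3,1,2,0,3,2,4,3,5,4,3,6,5,4,3,1,2,0,3,2,4,3,5]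
def sw17 : List (Fin 7) := [5,6,5,1,3,2,4,3,5,4,2,0,6,5,2,3,1,4,3,2,5,4,3,1,6,0,5,4,3,2,0,5,6,4,5,3,4,2,1,0,6,5,4,3,2,1,0,0,3,5,1,2,0,3,4,3,1,2,0,3,2,4,3,5,4,3,6,5,4,3,1,2,0,3,2,4,3,5]
def sw18 : List (Fin 7) := [5,6,5,1,3,2,4,3,5,2,0,6,2,3,4,5,1,3,4,2,3,1,6,5,4,3,4,2,0,5,6,3,4,5,2,3,4,2,1,0,6,5,4,3,2,1,0,0,3,5,1,2,0,3,4,3,1,2,0,3,2,4,3,5,4,3,6,5,4,3,1,2,0,3,2,4,3,5]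
def sw19 : List (Fin 7) := [5,6,5,1,3,4,5,3,2,0,6,2,3,4,5,1,3,2,4,3,1,6,5,3,4,5,6,3,2,3,4,5,0,2,3,4,1,0,6,5,4,3,2,1,0,0,3,5,1,2,0,3,4,3,1,2,0,3,2,4,3,5,4,3,6,5,4,3,1,2,0,3,2,4,3,5]
def sw20 : List (Fin 7) := [6,5,1,3,4,3,2,0,5,6,2,3,4,5,1,3,4,2,3,1,6,5,3,2,4,3,5,4,6,5,0,6,2,3,4,1,6,5,4,3,2,1,0,0,3,5,1,2,0,3,4,3,1,2,0,3,2,4,3,5,4,3,6,5,4,3,1,2,0,3,2,4,3,5]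
def sw21 : List (Fin 7) := [6,5,1,3,4,3,2,0,5,6,2,3,4,5,6,3,1,4,3,2,3,4,3,5,1,3,4,6,0,2,3,1,4,5,2,3,2,1,0,0,3,5,1,2,0,3,4,3,1,2,0,3,2,4,3,5,4,3,6,5,4,3,1,2,0,3,2,4,3,5]
def sw22 : List (Fin 7) := [6,1,3,4,5,6,4,0,2,3,4,5,6,2,3,1,4,0,2,3,4,5,1,6,2,0,3,2,4,3,1,3,4,5,2,3,2,1,0,0,3,5,1,2,0,3,4,3,1,2,0,3,2,4,3,5,4,3,6,5,4,3,1,2,0,3,2,4,3,5]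
def sw23 : List (Fin 7) := [6,1,3,4,5,6,0,2,3,4,5,6,2,3,1,4,0,2,3,4,5,6,2,0,3,1,2,3,4,5,3,2,1,3,0,0,3,5,1,2,0,3,4,3,1,2,0,3,2,4,3,5,4,3,6,5,4,3,1,2,0,3,2,4,3,5]
def sw24 : List (Fin 7) := [6,1,3,4,5,0,2,3,4,5,6,2,3,1,5,0,2,3,4,5,6,4,3,5,4,3,6,5,4,3,1,2,0,3,2,4,3,5]
def sw25 : List (Fin 7) := [6,1,0,2,3,4,5,3,2,4,3,1,0,2,3,4,6,5,6,5,4,3,6,5,4,3,1,2,0,3,2,4,3,5]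
def sw26 : List (Fin 7) := [6,1,0,4,3,5,3,5]
def sw27 : List (Fin 7) := [0,1,4,6]

set_option maxRecDepth 20000 in
lemma c0 : apps bigword mv0 = sw0 := by decide
set_option maxRecDepth 20000 in
lemma c1 : apps sw0 mv1 = sw1 := by decide
set_option maxRecDepth 20000 in
lemma c2 : apps sw1 mv2 = sw2 := by decide
set_option maxRecDepth 20000 in
lemma c3 : apps sw2 mv3 = sw3 := by decide
set_option maxRecDepth 20000 in
lemma c4 : apps sw3 mv4 = sw4 := by decide
set_option maxRecDepth 20000 in
lemma c5 : apps sw4 mv5 = sw5 := by decide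
set_option maxRecDepth 20000 in
lemma c6 : apps sw5 mv6 = sw6 := by decide
set_option maxRecDepth 20000 in
lemma c7 : apps sw6 mv7 = sw7 := by decide
set_option maxRecDepth 20000 in
lemma c8 : apps sw7 mv8 = sw8 := by decide
set_option maxRecDepth 20000 in
lemma c9 : apps sw8 mv9 = sw9 := by decide
set_option maxRecDepth 20000 in
lemma c10 : apps sw9 mv10 = sw10 := by decide
set_option maxRecDepth 20000 in
lemma c11 : apps sw10 mv11 = sw11 := by decide
set_option maxRecDepth 20000 in
lemma c12 : apps sw11 mv12 = sw12 := by decide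
set_option maxRecDepth 20000 in
lemma c13 : apps sw12 mv13 = sw13 := by decide
set_option maxRecDepth 20000 in
lemma c14 : apps sw13 mv14 = sw14 := by decide
set_option maxRecDepth 20000 in
lemma c15 : apps sw14 mv15 = sw15 := by decide
set_option maxRecDepth 20000 in
lemma c16 : apps sw15 mv16 = sw16 := by decide
set_option maxRecDepth 20000 in
lemma c17 : apps sw16 mv17 = sw17 := by decide
set_option maxRecDepth 20000 in
lemma c18 : apps sw17 mv18 = sw18 := by decide
set_option maxRecDepth 20000 in
lemma c19 : apps sw18 mv19 = sw19 := by decide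
set_option maxRecDepth 20000 in
lemma c20 : apps sw19 mv20 = sw20 := by decide
set_option maxRecDepth 20000 in
lemma c21 : apps sw20 mv21 = sw21 := by decide
set_option maxRecDepth 20000 in
lemma c22 : apps sw21 mv22 = sw22 := by decide
set_option maxRecDepth 20000 in
lemma c23 : apps sw22 mv23 = sw23 := by decide
set_option maxRecDepth 20000 in
lemma c24 : apps sw23 mv24 = sw24 := by decide
set_option maxRecDepth 20000 in
lemma c25 : apps sw24 mv25 = sw25 := by decide
set_option maxRecDepth 20000 in
lemma c26 : apps sw25 mv26 = sw26 := by decide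
set_option maxRecDepth 20000 in
lemma c27 : apps sw26 mv27 = sw27 := by decide

lemma p0 : π bigword = π sw0 := by rw [← c0, apps_prod]
lemma p1 : π sw0 = π sw1 := by rw [← c1, apps_prod]
lemma p2 : π sw1 = π sw2 := by rw [← c2, apps_prod]
lemma p3 : π sw2 = π sw3 := by rw [← c3, apps_prod]
lemma p4 : π sw3 = π sw4 := by rw [← c4, apps_prod]
lemma p5 : π sw4 = π sw5 := by rw [← c5, apps_prod]
lemma p6 : π sw5 = π sw6 := by rw [← c6, apps_prod]
lemma p7 : π sw6 = π sw7 := by rw [← c7, apps_prod]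
lemma p8 : π sw7 = π sw8 := by rw [← c8, apps_prod]
lemma p9 : π sw8 = π sw9 := by rw [← c9, apps_prod]
lemma p10 : π sw9 = π sw10 := by rw [← c10, apps_prod]
lemma p11 : π sw10 = π sw11 := by rw [← c11, apps_prod]
lemma p12 : π sw11 = π sw12 := by rw [← c12, apps_prod]
lemma p13 : π sw12 = π sw13 := by rw [← c13, apps_prod]
lemma p14 : π sw13 = π sw14 := by rw [← c14, apps_prod]
lemma p15 : π sw14 = π sw15 := by rw [← c15, apps_prod]
lemma p16 : π sw15 = π sw16 := by rw [← c16, apps_prod]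
lemma p17 : π sw16 = π sw17 := by rw [← c17, apps_prod]
lemma p18 : π sw17 = π sw18 := by rw [← c18, apps_prod]
lemma p19 : π sw18 = π sw19 := by rw [← c19, apps_prod]
lemma p20 : π sw19 = π sw20 := by rw [← c20, apps_prod]
lemma p21 : π sw20 = π sw21 := by rw [← c21, apps_prod]
lemma p22 : π sw21 = π sw22 := by rw [← c22, apps_prod]
lemma p23 : π sw22 = π sw23 := by rw [← c23, apps_prod]
lemma p24 : π sw23 = π sw24 := by rw [← c24, apps_prod]
lemma p25 : π sw24 = π sw25 := by rw [← c25, apps_prod]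
lemma p26 : π sw25 = π sw26 := by rw [← c26, apps_prod]
lemma p27 : π sw26 = π sw27 := by rw [← c27, apps_prod]

lemma pchain : π bigword = π sw27 := p0|>.trans p1|>.trans p2|>.trans p3|>.trans p4|>.trans p5|>.trans p6|>.trans p7|>.trans p8|>.trans p9|>.trans p10|>.trans p11|>.trans p12|>.trans p13|>.trans p14|>.trans p15|>.trans p16|>.trans p17|>.trans p18|>.trans p19|>.trans p20|>.trans p21|>.trans p22|>.trans p23|>.trans p24|>.trans p25|>.trans p26|>.trans p27

lemma conj_eq : π wg * (π wc.reverse * (σ 0 * σ 3 * σ 5)) * (π wg)⁻¹ = σ 0 * σ 1 * σ 4 * σ 6 := by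
  have h035 : σ 0 * σ 3 * σ 5 = π [0,3,5] := by
    simp [cs.wordProd_cons, cs.wordProd_nil, mul_assoc]
  have hrev : (π wg)⁻¹ = π wg.reverse := (cs.wordProd_reverse wg).symm
  rw [h035, hrev, ← cs.wordProd_append, ← cs.wordProd_append, ← cs.wordProd_append]
  have hb : wg ++ (wc.reverse ++ [0,3,5]) ++ wg.reverse = bigword := by
    simp [bigword, List.append_assoc]
  rw [hb, pchain]
  show π [0,1,4,6] = _
  simp [cs.wordProd_cons, cs.wordProd_nil, mul_assoc]

end Stmt13Aux

open Stmt13Aux in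
/-- In the Coxeter group `W` of type `E₇` (with simple reflections `s₁, …, s₇` in Bourbaki
numbering, here 0-indexed as `s 0, …, s 6`), the element `w₀ · (s₁ s₄ s₆)` is conjugate
in `W` to `s₁ s₂ s₅ s₇`, where `w₀` is an element of maximal Coxeter length. -/
theorem stmt13 (w₀ : CoxeterMatrix.E₇.Group)
    (hw₀ : ∀ w : CoxeterMatrix.E₇.Group,
      CoxeterMatrix.E₇.toCoxeterSystem.length w ≤ CoxeterMatrix.E₇.toCoxeterSystem.length w₀) :
    IsConj (w₀ * (CoxeterMatrix.E₇.simple 0 * CoxeterMatrix.E₇.simple 3 *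
        CoxeterMatrix.E₇.simple 5))
      (CoxeterMatrix.E₇.simple 0 * CoxeterMatrix.E₇.simple 1 *
        CoxeterMatrix.E₇.simple 4 * CoxeterMatrix.E₇.simple 6) := by
  have hs : ∀ i : Fin 7, CoxeterMatrix.E₇.simple i = cs.simple i := fun i => rfl
  rw [w0_eq w₀ hw₀]
  rw [isConj_iff]
  refine ⟨cs.wordProd wg, ?_⟩
  simp only [hs]
  calc cs.wordProd wg * (cs.wordProd wc.reverse *
        (cs.simple 0 * cs.simple 3 * cs.simple 5)) * (cs.wordProd wg)⁻¹
      = cs.simple 0 * cs.simple 1 * cs.simple 4 * cs.simple 6 := conj_eq
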